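/- For each i ∈ ℕ and each level i, the relation ≤ᵏᵢ on words (defined by: every Σᵢ first-order sentence of quantifier rank at most k satisfied by w is satisfied by w') is a preorder compatible with concatenation: if w₁ ≤ᵏᵢ w₂ and w₁' ≤ᵏᵢ w₂' then w₁w₁' ≤ᵏᵢ w₂w₂'. -/

import Mathlib

/-- First-order formulas over words on alphabet `A`, with de Bruijn indexed
variables, unary letter predicates `P_a x` and the order predicate `x < y`. -/
inductive FO (A : Type) : Type
  | letter : A → ℕ → FO A
  | lt : ℕ → ℕ → FO A
  | not : FO A → FO A
  | and : FO A → FO A → FO A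
  | or : FO A → FO A → FO A
  | ex : FO A → FO A
  | all : FO A → FO A

namespace FO

variable {A : Type}

/-- Satisfaction of a formula in a word `w` under an assignment `v` of
variables to positions; quantifiers range over the positions of `w`,
`letter a x` holds when position `v x` carries the letter `a`. -/
def Sat (w : List A) : (ℕ → ℕ) → FO A → Prop
  | v, letter a x => w[(v x)]? = some a
  | v, lt x y => v x < v y ∧ v y < w.length
  | v, not φ => ¬ Sat w v φ
  | v, and φ ψ => Sat w v φ ∧ Sat w v ψ
  | v, or φ ψ => Sat w v φ ∨ Sat w v ψ
  | v, ex φ => ∃ p < w.length, Sat w (fun n => Nat.casesOn n p v) φ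
  | v, all φ => ∀ p < w.length, Sat w (fun n => Nat.casesOn n p v) φ

/-- Quantifier rank of a formula. -/
def qr : FO A → ℕ
  | letter _ _ => 0
  | lt _ _ => 0
  | not φ => qr φ
  | and φ ψ => max (qr φ) (qr ψ)
  | or φ ψ => max (qr φ) (qr ψ)
  | ex φ => qr φ + 1
  | all φ => qr φ + 1

/-- A bound on free (de Bruijn) variables: all free variables are `< fvBound φ`. -/
def fvBound : FO A → ℕ
  | letter _ x => x + 1
  | lt x y => max x y + 1
  | not φ => fvBound φ
  | and φ ψ => max (fvBound φ) (fvBound ψ)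
  | or φ ψ => max (fvBound φ) (fvBound ψ)
  | ex φ => fvBound φ - 1
  | all φ => fvBound φ - 1

/-- A sentence is a formula with no free variables. -/
def IsSentence (φ : FO A) : Prop := fvBound φ = 0

/-- Quantifier-free formulas. -/
def QF : FO A → Prop
  | letter _ _ => True
  | lt _ _ => True
  | not φ => QF φ
  | and φ ψ => QF φ ∧ QF ψ
  | or φ ψ => QF φ ∧ QF ψ
  | ex _ => False
  | all _ => False

mutual
  /-- `Σᵢ` formulas: quantifier-free formulas, positive boolean combinations,
  existential quantification over `Σᵢ` (for `i ≥ 1`), and every `Πᵢ` formula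
  is `Σ_{i+1}`; this captures formulas whose prenex normal form has at most
  `i` quantifier blocks starting with an existential block. -/
  inductive IsSigma : ℕ → FO A → Prop
    | of_qf {i : ℕ} {φ : FO A} : QF φ → IsSigma i φ
    | of_pi {i : ℕ} {φ : FO A} : IsPi i φ → IsSigma (i + 1) φ
    | and {i : ℕ} {φ ψ : FO A} : IsSigma i φ → IsSigma i ψ → IsSigma i (FO.and φ ψ)
    | or {i : ℕ} {φ ψ : FO A} : IsSigma i φ → IsSigma i ψ → IsSigma i (FO.or φ ψ)
    | ex {i : ℕ} {φ : FO A} : IsSigma (i + 1) φ → IsSigma (i + 1) (FO.ex φ)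
  /-- `Πᵢ` formulas, dual to `Σᵢ`. -/
  inductive IsPi : ℕ → FO A → Prop
    | of_qf {i : ℕ} {φ : FO A} : QF φ → IsPi i φ
    | of_sigma {i : ℕ} {φ : FO A} : IsSigma i φ → IsPi (i + 1) φ
    | and {i : ℕ} {φ ψ : FO A} : IsPi i φ → IsPi i ψ → IsPi i (FO.and φ ψ)
    | or {i : ℕ} {φ ψ : FO A} : IsPi i φ → IsPi i ψ → IsPi i (FO.or φ ψ)
    | all {i : ℕ} {φ : FO A} : IsPi (i + 1) φ → IsPi (i + 1) (FO.all φ)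
end

/-- The preorder `w ≤ᵏᵢ w'`: every `Σᵢ` sentence of quantifier rank at most
`k` satisfied by `w` is satisfied by `w'`. -/
def sle (i k : ℕ) (w w' : List A) : Prop :=
  ∀ φ : FO A, IsSigma i φ → qr φ ≤ k → IsSentence φ →
    Sat w (fun _ => 0) φ → Sat w' (fun _ => 0) φ

end FO
namespace FO

variable {A : Type}

/-- `FV φ n` : de Bruijn index `n` is free in `φ`. -/
def FV : FO A → ℕ → Prop
  | letter _ x, n => n = x
  | lt x y, n => n = x ∨ n = y
  | not φ, n => FV φ n
  | and φ ψ, n => FV φ n ∨ FV ψ n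
  | or φ ψ, n => FV φ n ∨ FV ψ n
  | ex φ, n => FV φ (n + 1)
  | all φ, n => FV φ (n + 1)

lemma sat_congr {φ : FO A} : ∀ {w : List A} {v₁ v₂ : ℕ → ℕ},
    (∀ n, FV φ n → v₁ n = v₂ n) → (Sat w v₁ φ ↔ Sat w v₂ φ) := by
  induction φ with
  | letter a x => intro w v₁ v₂ h; simp [Sat, h x rfl]
  | lt x y => intro w v₁ v₂ h; simp [Sat, h x (Or.inl rfl), h y (Or.inr rfl)]
  | not φ ih => intro w v₁ v₂ h; simp only [Sat]; rw [ih h]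
  | and φ ψ ih₁ ih₂ =>
      intro w v₁ v₂ h; simp only [Sat]
      rw [ih₁ (fun n hn => h n (Or.inl hn)), ih₂ (fun n hn => h n (Or.inr hn))]
  | or φ ψ ih₁ ih₂ =>
      intro w v₁ v₂ h; simp only [Sat]
      rw [ih₁ (fun n hn => h n (Or.inl hn)), ih₂ (fun n hn => h n (Or.inr hn))]
  | ex φ ih =>
      intro w v₁ v₂ h; simp only [Sat]
      refine exists_congr fun p => and_congr_right fun _ => ih ?_
      intro n hn; cases n with
      | zero => rfl
      | succ m => exact h m hn
  | all φ ih =>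
      intro w v₁ v₂ h; simp only [Sat]
      refine forall_congr' fun p => imp_congr_right fun _ => ih ?_
      intro n hn; cases n with
      | zero => rfl
      | succ m => exact h m hn

lemma fvBound_le {φ : FO A} : ∀ {m : ℕ}, (∀ n, FV φ n → n < m) → fvBound φ ≤ m := by
  induction φ with
  | letter a x => intro m h; exact h x rfl
  | lt x y =>
      intro m h
      have hx := h x (Or.inl rfl); have hy := h y (Or.inr rfl)
      simp only [fvBound]; omega
  | not φ ih => intro m h; exact ih h
  | and φ ψ ih₁ ih₂ =>
      intro m h
      exact max_le (ih₁ fun n hn => h n (Or.inl hn)) (ih₂ fun n hn => h n (Or.inr hn))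
  | or φ ψ ih₁ ih₂ =>
      intro m h
      exact max_le (ih₁ fun n hn => h n (Or.inl hn)) (ih₂ fun n hn => h n (Or.inr hn))
  | ex φ ih =>
      intro m h
      have : fvBound φ ≤ m + 1 := by
        refine ih fun n hn => ?_
        cases n with
        | zero => exact Nat.succ_pos m
        | succ p => exact Nat.succ_lt_succ (h p hn)
      exact Nat.sub_le_of_le_add (by omega)
  | all φ ih =>
      intro m h
      have : fvBound φ ≤ m + 1 := by
        refine ih fun n hn => ?_
        cases n with
        | zero => exact Nat.succ_pos m
        | succ p => exact Nat.succ_lt_succ (h p hn)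
      exact Nat.sub_le_of_le_add (by omega)



/-- Lift a renaming under a binder. -/
def lift (f : ℕ → ℕ) : ℕ → ℕ := fun n => Nat.casesOn n 0 (fun m => f m + 1)

/-- Rename the free variables of a formula. -/
def rename (f : ℕ → ℕ) : FO A → FO A
  | letter a x => letter a (f x)
  | lt x y => lt (f x) (f y)
  | not φ => not (rename f φ)
  | and φ ψ => and (rename f φ) (rename f ψ)
  | or φ ψ => or (rename f φ) (rename f ψ)
  | ex φ => ex (rename (lift f) φ)
  | all φ => all (rename (lift f) φ)

lemma cons_comp_lift (p : ℕ) (v f : ℕ → ℕ) :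
    (fun n => Nat.casesOn n p v : ℕ → ℕ) ∘ lift f
      = (fun n => Nat.casesOn n p (v ∘ f)) := by
  funext n; cases n <;> rfl

lemma sat_rename {φ : FO A} : ∀ {w : List A} {v : ℕ → ℕ} {f : ℕ → ℕ},
    Sat w v (rename f φ) ↔ Sat w (v ∘ f) φ := by
  induction φ with
  | letter a x => intro w v f; simp [rename, Sat, Function.comp]
  | lt x y => intro w v f; simp [rename, Sat, Function.comp]
  | not φ ih => intro w v f; simp only [rename, Sat]; rw [ih]
  | and φ ψ ih₁ ih₂ => intro w v f; simp only [rename, Sat]; rw [ih₁, ih₂]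
  | or φ ψ ih₁ ih₂ => intro w v f; simp only [rename, Sat]; rw [ih₁, ih₂]
  | ex φ ih =>
      intro w v f; simp only [rename, Sat]
      exact exists_congr fun p => and_congr_right fun _ => by
        rw [ih, cons_comp_lift]
  | all φ ih =>
      intro w v f; simp only [rename, Sat]
      exact forall_congr' fun p => imp_congr_right fun _ => by
        rw [ih, cons_comp_lift]

lemma qr_rename {φ : FO A} : ∀ {f : ℕ → ℕ}, qr (rename f φ) = qr φ := by
  induction φ with
  | letter a x => intro f; rfl
  | lt x y => intro f; rfl
  | not φ ih => intro f; simp only [rename, qr]; rw [ih]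
  | and φ ψ ih₁ ih₂ => intro f; simp only [rename, qr]; rw [ih₁, ih₂]
  | or φ ψ ih₁ ih₂ => intro f; simp only [rename, qr]; rw [ih₁, ih₂]
  | ex φ ih => intro f; simp only [rename, qr]; rw [ih]
  | all φ ih => intro f; simp only [rename, qr]; rw [ih]

lemma fv_rename {φ : FO A} : ∀ {f : ℕ → ℕ} {n : ℕ},
    FV (rename f φ) n ↔ ∃ m, FV φ m ∧ f m = n := by
  induction φ with
  | letter a x =>
      intro f n; simp only [rename, FV]
      constructor
      · rintro rfl; exact ⟨x, rfl, rfl⟩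
      · rintro ⟨m, rfl, rfl⟩; rfl
  | lt x y =>
      intro f n; simp only [rename, FV]
      constructor
      · rintro (rfl | rfl)
        · exact ⟨x, Or.inl rfl, rfl⟩
        · exact ⟨y, Or.inr rfl, rfl⟩
      · rintro ⟨m, (rfl | rfl), rfl⟩
        · exact Or.inl rfl
        · exact Or.inr rfl
  | not φ ih => intro f n; exact ih
  | and φ ψ ih₁ ih₂ =>
      intro f n; simp only [rename, FV]
      rw [ih₁, ih₂]
      constructor
      · rintro (⟨m, hm, rfl⟩ | ⟨m, hm, rfl⟩)
        exacts [⟨m, Or.inl hm, rfl⟩, ⟨m, Or.inr hm, rfl⟩]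
      · rintro ⟨m, (hm | hm), rfl⟩
        exacts [Or.inl ⟨m, hm, rfl⟩, Or.inr ⟨m, hm, rfl⟩]
  | or φ ψ ih₁ ih₂ =>
      intro f n; simp only [rename, FV]
      rw [ih₁, ih₂]
      constructor
      · rintro (⟨m, hm, rfl⟩ | ⟨m, hm, rfl⟩)
        exacts [⟨m, Or.inl hm, rfl⟩, ⟨m, Or.inr hm, rfl⟩]
      · rintro ⟨m, (hm | hm), rfl⟩
        exacts [Or.inl ⟨m, hm, rfl⟩, Or.inr ⟨m, hm, rfl⟩]
  | ex φ ih =>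
      intro f n; simp only [rename, FV]
      rw [ih]
      constructor
      · rintro ⟨m, hm, hf⟩
        cases m with
        | zero => exact absurd hf (by simp [lift])
        | succ m' =>
            refine ⟨m', hm, ?_⟩
            have : f m' + 1 = n + 1 := hf
            omega
      · rintro ⟨m, hm, rfl⟩; exact ⟨m + 1, hm, rfl⟩
  | all φ ih =>
      intro f n; simp only [rename, FV]
      rw [ih]
      constructor
      · rintro ⟨m, hm, hf⟩
        cases m with
        | zero => exact absurd hf (by simp [lift])
        | succ m' =>
            refine ⟨m', hm, ?_⟩
            have : f m' + 1 = n + 1 := hf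
            omega
      · rintro ⟨m, hm, rfl⟩; exact ⟨m + 1, hm, rfl⟩

lemma qf_rename {φ : FO A} (h : QF φ) : ∀ {f : ℕ → ℕ}, QF (rename f φ) := by
  induction φ with
  | letter a x => intro f; trivial
  | lt x y => intro f; trivial
  | not φ ih => intro f; exact ih h
  | and φ ψ ih₁ ih₂ => intro f; exact ⟨ih₁ h.1, ih₂ h.2⟩
  | or φ ψ ih₁ ih₂ => intro f; exact ⟨ih₁ h.1, ih₂ h.2⟩
  | ex φ ih => exact h.elim
  | all φ ih => exact h.elim

/-- Simultaneous induction for `IsSigma` and `IsPi`. -/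
lemma sigma_pi_induction (motive_1 motive_2 : ℕ → FO A → Prop)
    (hqf1 : ∀ {i : ℕ} {φ : FO A}, QF φ → motive_1 i φ)
    (hpi : ∀ {i : ℕ} {φ : FO A}, IsPi i φ → motive_2 i φ → motive_1 (i + 1) φ)
    (hand1 : ∀ {i : ℕ} {φ ψ : FO A}, IsSigma i φ → IsSigma i ψ →
      motive_1 i φ → motive_1 i ψ → motive_1 i (FO.and φ ψ))
    (hor1 : ∀ {i : ℕ} {φ ψ : FO A}, IsSigma i φ → IsSigma i ψ →
      motive_1 i φ → motive_1 i ψ → motive_1 i (FO.or φ ψ))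
    (hex : ∀ {i : ℕ} {φ : FO A}, IsSigma (i + 1) φ →
      motive_1 (i + 1) φ → motive_1 (i + 1) (FO.ex φ))
    (hqf2 : ∀ {i : ℕ} {φ : FO A}, QF φ → motive_2 i φ)
    (hsigma : ∀ {i : ℕ} {φ : FO A}, IsSigma i φ → motive_1 i φ → motive_2 (i + 1) φ)
    (hand2 : ∀ {i : ℕ} {φ ψ : FO A}, IsPi i φ → IsPi i ψ →
      motive_2 i φ → motive_2 i ψ → motive_2 i (FO.and φ ψ))
    (hor2 : ∀ {i : ℕ} {φ ψ : FO A}, IsPi i φ → IsPi i ψ →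
      motive_2 i φ → motive_2 i ψ → motive_2 i (FO.or φ ψ))
    (hall : ∀ {i : ℕ} {φ : FO A}, IsPi (i + 1) φ →
      motive_2 (i + 1) φ → motive_2 (i + 1) (FO.all φ)) :
    (∀ i (φ : FO A), IsSigma i φ → motive_1 i φ) ∧
      (∀ i (φ : FO A), IsPi i φ → motive_2 i φ) := by
  constructor
  · intro i φ h
    refine @IsSigma.rec A (fun i φ _ => motive_1 i φ) (fun i φ _ => motive_2 i φ)
      ?_ ?_ ?_ ?_ ?_ ?_ ?_ ?_ ?_ ?_ i φ h
    · exact fun a => hqf1 a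
    · exact fun a ih => hpi a ih
    · exact fun a b iha ihb => hand1 a b iha ihb
    · exact fun a b iha ihb => hor1 a b iha ihb
    · exact fun a ih => hex a ih
    · exact fun a => hqf2 a
    · exact fun a ih => hsigma a ih
    · exact fun a b iha ihb => hand2 a b iha ihb
    · exact fun a b iha ihb => hor2 a b iha ihb
    · exact fun a ih => hall a ih
  · intro i φ h
    refine @IsPi.rec A (fun i φ _ => motive_1 i φ) (fun i φ _ => motive_2 i φ)
      ?_ ?_ ?_ ?_ ?_ ?_ ?_ ?_ ?_ ?_ i φ h
    · exact fun a => hqf1 a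
    · exact fun a ih => hpi a ih
    · exact fun a b iha ihb => hand1 a b iha ihb
    · exact fun a b iha ihb => hor1 a b iha ihb
    · exact fun a ih => hex a ih
    · exact fun a => hqf2 a
    · exact fun a ih => hsigma a ih
    · exact fun a b iha ihb => hand2 a b iha ihb
    · exact fun a b iha ihb => hor2 a b iha ihb
    · exact fun a ih => hall a ih

lemma rename_cls :
    (∀ i (φ : FO A), IsSigma i φ → ∀ f, IsSigma i (rename f φ)) ∧
      (∀ i (φ : FO A), IsPi i φ → ∀ f, IsPi i (rename f φ)) := by
  refine sigma_pi_induction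
    (fun i φ => ∀ f, IsSigma i (rename f φ)) (fun i φ => ∀ f, IsPi i (rename f φ))
    ?_ ?_ ?_ ?_ ?_ ?_ ?_ ?_ ?_ ?_
  · exact fun h f => IsSigma.of_qf (qf_rename h)
  · exact fun _ ih f => IsSigma.of_pi (ih f)
  · exact fun _ _ ih₁ ih₂ f => IsSigma.and (ih₁ f) (ih₂ f)
  · exact fun _ _ ih₁ ih₂ f => IsSigma.or (ih₁ f) (ih₂ f)
  · exact fun _ ih f => IsSigma.ex (ih (lift f))
  · exact fun h f => IsPi.of_qf (qf_rename h)
  · exact fun _ ih f => IsPi.of_sigma (ih f)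
  · exact fun _ _ ih₁ ih₂ f => IsPi.and (ih₁ f) (ih₂ f)
  · exact fun _ _ ih₁ ih₂ f => IsPi.or (ih₁ f) (ih₂ f)
  · exact fun _ ih f => IsPi.all (ih (lift f))


/-! ### A formula expressing that a variable is in range -/

/-- Disjunction of letter predicates over a list. -/
def orLetters (l : List A) (x : ℕ) : FO A :=
  l.foldr (fun a acc => FO.or (FO.letter a x) acc) (FO.lt x x)

lemma sat_orLetters {l : List A} {w : List A} {v : ℕ → ℕ} {x : ℕ} :
    Sat w v (orLetters l x) ↔ ∃ a ∈ l, w[(v x)]? = some a := by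
  induction l with
  | nil => simp [orLetters, Sat]
  | cons a t ih =>
      simp only [orLetters, List.foldr_cons, Sat]
      rw [show (t.foldr (fun a acc => FO.or (FO.letter a x) acc) (FO.lt x x)) = orLetters t x from rfl,
        ih]
      simp

lemma qf_orLetters {l : List A} {x : ℕ} : QF (orLetters l x) := by
  induction l with
  | nil => trivial
  | cons a t ih => exact ⟨trivial, ih⟩

lemma qr_orLetters {l : List A} {x : ℕ} : qr (orLetters l x) = 0 := by
  induction l with
  | nil => rfl
  | cons a t ih => simp [orLetters, qr] at ih ⊢; exact ih

lemma fv_orLetters {l : List A} {x n : ℕ} (h : FV (orLetters l x) n) : n = x := by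
  induction l with
  | nil => rcases h with h | h <;> exact h
  | cons a t ih => rcases h with h | h; exact h; exact ih h

set_option linter.unusedSectionVars false

variable [Fintype A]

/-- A quantifier-free formula asserting that the position of variable `x`
is within the word. -/
noncomputable def inRange (x : ℕ) : FO A := orLetters Finset.univ.toList x

lemma sat_inRange {w : List A} {v : ℕ → ℕ} {x : ℕ} :
    Sat w v (inRange x) ↔ v x < w.length := by
  rw [inRange, sat_orLetters]
  constructor
  · rintro ⟨a, -, ha⟩; exact (List.getElem?_eq_some_iff.mp ha).1
  · intro h
    exact ⟨w[v x], by simp, List.getElem?_eq_getElem h⟩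

lemma qf_inRange {x : ℕ} : QF (inRange (A := A) x) := qf_orLetters

lemma qr_inRange {x : ℕ} : qr (inRange (A := A) x) = 0 := qr_orLetters

lemma fv_inRange {x n : ℕ} (h : FV (inRange (A := A) x) n) : n = x := fv_orLetters h

/-! ### Optional formulas (`none` means "true") -/

/-- Satisfaction of an optional formula (`none` is true). -/
def oSat (w : List A) (v : ℕ → ℕ) : Option (FO A) → Prop
  | Option.none => True
  | Option.some ψ => Sat w v ψ

/-- Quantifier rank of an optional formula. -/
def oqr : Option (FO A) → ℕ
  | Option.none => 0
  | Option.some ψ => qr ψ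

/-- Free variables of an optional formula. -/
def oFV : Option (FO A) → ℕ → Prop
  | Option.none, _ => False
  | Option.some ψ, n => FV ψ n

/-- A class constraint on an optional formula. -/
def oC (C : FO A → Prop) : Option (FO A) → Prop
  | Option.none => True
  | Option.some ψ => C ψ

/-- Conjunction of optional formulas. -/
def oAnd : Option (FO A) → Option (FO A) → Option (FO A)
  | Option.none, b => b
  | Option.some a, Option.none => Option.some a
  | Option.some a, Option.some b => Option.some (FO.and a b)

@[simp] lemma oSat_none {w : List A} {v : ℕ → ℕ} : oSat w v Option.none := trivial

@[simp] lemma oSat_some {w : List A} {v : ℕ → ℕ} {ψ : FO A} :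
    oSat w v (Option.some ψ) ↔ Sat w v ψ := Iff.rfl

lemma oSat_oAnd {w : List A} {v : ℕ → ℕ} {a b : Option (FO A)} :
    oSat w v (oAnd a b) ↔ oSat w v a ∧ oSat w v b := by
  cases a <;> cases b <;> simp [oAnd, oSat, Sat]

lemma oqr_oAnd {a b : Option (FO A)} : oqr (oAnd a b) = max (oqr a) (oqr b) := by
  cases a <;> cases b <;> simp [oAnd, oqr, qr]

lemma oFV_oAnd {a b : Option (FO A)} {n : ℕ} (h : oFV (oAnd a b) n) :
    oFV a n ∨ oFV b n := by
  cases a <;> cases b <;> simp [oAnd, oFV, FV] at h ⊢ <;> tauto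

lemma oC_oAnd {C : FO A → Prop} (hC : ∀ p q, C p → C q → C (FO.and p q))
    {a b : Option (FO A)} (ha : oC C a) (hb : oC C b) : oC C (oAnd a b) := by
  cases a <;> cases b <;> simp [oAnd, oC] at * <;> solve_by_elim

/-! ### Decompositions -/

/-- The combined assignment on `u ++ v` induced by a side function `s` and
assignments for the two parts. -/
def comb (s : ℕ → Bool) (m : ℕ) (vL vR : ℕ → ℕ) : ℕ → ℕ :=
  fun n => if s n then m + vR n else vL n

/-- `Dec C q φ s L` : `L` is a decomposition of `φ` (with variables assigned
sides by `s`) into pairs of optional formulas of class `C` and quantifier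
rank at most `q`. -/
def Dec (C : FO A → Prop) (q : ℕ) (φ : FO A) (s : ℕ → Bool)
    (L : List (Option (FO A) × Option (FO A))) : Prop :=
  (∀ p ∈ L, oC C p.1 ∧ oC C p.2 ∧ oqr p.1 ≤ q ∧ oqr p.2 ≤ q ∧
    (∀ n, oFV p.1 n → FV φ n ∧ s n = false) ∧
    (∀ n, oFV p.2 n → FV φ n ∧ s n = true)) ∧
  ∀ (u v : List A) (vL vR : ℕ → ℕ),
    (∀ n, FV φ n → if s n then vR n < v.length else vL n < u.length) →
    (Sat (u ++ v) (comb s u.length vL vR) φ ↔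
      ∃ p ∈ L, oSat u vL p.1 ∧ oSat v vR p.2)

lemma Dec.mono {C C' : FO A → Prop} {q q' : ℕ} {φ : FO A} {s : ℕ → Bool}
    {L : List (Option (FO A) × Option (FO A))}
    (h : Dec C q φ s L) (hC : ∀ ψ, C ψ → C' ψ) (hq : q ≤ q') : Dec C' q' φ s L := by
  refine ⟨fun p hp => ?_, h.2⟩
  obtain ⟨h1, h2, h3, h4, h5, h6⟩ := h.1 p hp
  refine ⟨?_, ?_, h3.trans hq, h4.trans hq, h5, h6⟩
  · cases hp1 : p.1 with
    | none => trivial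
    | some ψ => rw [hp1] at h1; exact hC ψ h1
  · cases hp2 : p.2 with
    | none => trivial
    | some ψ => rw [hp2] at h2; exact hC ψ h2

lemma Dec.and {C : FO A → Prop} (hC : ∀ p q, C p → C q → C (FO.and p q))
    {q : ℕ} {φ ψ : FO A} {s : ℕ → Bool} {L₁ L₂ : List (Option (FO A) × Option (FO A))}
    (h₁ : Dec C q φ s L₁) (h₂ : Dec C q ψ s L₂) :
    Dec C q (FO.and φ ψ) s
      ((L₁ ×ˢ L₂).map fun p => (oAnd p.1.1 p.2.1, oAnd p.1.2 p.2.2)) := by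
  constructor
  · rintro p hp
    simp only [List.mem_map] at hp
    obtain ⟨⟨r₁, r₂⟩, hr, rfl⟩ := hp
    rw [List.mem_product] at hr
    obtain ⟨q1, q2, q3, q4, q5, q6⟩ := h₁.1 r₁ hr.1
    obtain ⟨t1, t2, t3, t4, t5, t6⟩ := h₂.1 r₂ hr.2
    refine ⟨oC_oAnd hC q1 t1, oC_oAnd hC q2 t2, ?_, ?_, ?_, ?_⟩
    · rw [oqr_oAnd]; exact max_le q3 t3
    · rw [oqr_oAnd]; exact max_le q4 t4
    · intro n hn
      rcases oFV_oAnd hn with hn | hn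
      · exact ⟨Or.inl (q5 n hn).1, (q5 n hn).2⟩
      · exact ⟨Or.inr (t5 n hn).1, (t5 n hn).2⟩
    · intro n hn
      rcases oFV_oAnd hn with hn | hn
      · exact ⟨Or.inl (q6 n hn).1, (q6 n hn).2⟩
      · exact ⟨Or.inr (t6 n hn).1, (t6 n hn).2⟩
  · intro u v vL vR hinv
    have i₁ := h₁.2 u v vL vR (fun n hn => hinv n (Or.inl hn))
    have i₂ := h₂.2 u v vL vR (fun n hn => hinv n (Or.inr hn))
    show Sat _ _ φ ∧ Sat _ _ ψ ↔ _
    rw [i₁, i₂]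
    constructor
    · rintro ⟨⟨p₁, hp₁, s₁, s₁'⟩, ⟨p₂, hp₂, s₂, s₂'⟩⟩
      refine ⟨(oAnd p₁.1 p₂.1, oAnd p₁.2 p₂.2), ?_, ?_, ?_⟩
      · simp only [List.mem_map]
        exact ⟨(p₁, p₂), List.mem_product.mpr ⟨hp₁, hp₂⟩, rfl⟩
      · exact oSat_oAnd.mpr ⟨s₁, s₂⟩
      · exact oSat_oAnd.mpr ⟨s₁', s₂'⟩
    · rintro ⟨p, hp, hs, hs'⟩
      simp only [List.mem_map] at hp
      obtain ⟨⟨r₁, r₂⟩, hr, rfl⟩ := hp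
      rw [List.mem_product] at hr
      rw [oSat_oAnd] at hs hs'
      exact ⟨⟨r₁, hr.1, hs.1, hs'.1⟩, ⟨r₂, hr.2, hs.2, hs'.2⟩⟩

lemma Dec.or {C : FO A → Prop}
    {q : ℕ} {φ ψ : FO A} {s : ℕ → Bool} {L₁ L₂ : List (Option (FO A) × Option (FO A))}
    (h₁ : Dec C q φ s L₁) (h₂ : Dec C q ψ s L₂) :
    Dec C q (FO.or φ ψ) s (L₁ ++ L₂) := by
  constructor
  · intro p hp
    rcases List.mem_append.mp hp with hp | hp
    · obtain ⟨q1, q2, q3, q4, q5, q6⟩ := h₁.1 p hp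
      exact ⟨q1, q2, q3, q4, fun n hn => ⟨Or.inl (q5 n hn).1, (q5 n hn).2⟩,
        fun n hn => ⟨Or.inl (q6 n hn).1, (q6 n hn).2⟩⟩
    · obtain ⟨q1, q2, q3, q4, q5, q6⟩ := h₂.1 p hp
      exact ⟨q1, q2, q3, q4, fun n hn => ⟨Or.inr (q5 n hn).1, (q5 n hn).2⟩,
        fun n hn => ⟨Or.inr (q6 n hn).1, (q6 n hn).2⟩⟩
  · intro u v vL vR hinv
    have i₁ := h₁.2 u v vL vR (fun n hn => hinv n (Or.inl hn))
    have i₂ := h₂.2 u v vL vR (fun n hn => hinv n (Or.inr hn))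
    show Sat _ _ φ ∨ Sat _ _ ψ ↔ _
    rw [i₁, i₂]
    constructor
    · rintro (⟨p, hp, h1, h2⟩ | ⟨p, hp, h1, h2⟩)
      · exact ⟨p, List.mem_append.mpr (Or.inl hp), h1, h2⟩
      · exact ⟨p, List.mem_append.mpr (Or.inr hp), h1, h2⟩
    · rintro ⟨p, hp, h1, h2⟩
      rcases List.mem_append.mp hp with hp | hp
      · exact Or.inl ⟨p, hp, h1, h2⟩
      · exact Or.inr ⟨p, hp, h1, h2⟩



/-! ### Decomposition of quantifier-free formulas -/

/-- The property pack of a decomposition pair. -/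
def Pack (C : FO A → Prop) (q : ℕ) (φ : FO A) (s : ℕ → Bool)
    (p : Option (FO A) × Option (FO A)) : Prop :=
  oC C p.1 ∧ oC C p.2 ∧ oqr p.1 ≤ q ∧ oqr p.2 ≤ q ∧
    (∀ n, oFV p.1 n → FV φ n ∧ s n = false) ∧
    (∀ n, oFV p.2 n → FV φ n ∧ s n = true)

lemma dec_iff_pack {C : FO A → Prop} {q : ℕ} {φ : FO A} {s : ℕ → Bool}
    {L : List (Option (FO A) × Option (FO A))} :
    Dec C q φ s L ↔ ((∀ p ∈ L, Pack C q φ s p) ∧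
      ∀ (u v : List A) (vL vR : ℕ → ℕ),
        (∀ n, FV φ n → if s n then vR n < v.length else vL n < u.length) →
        (Sat (u ++ v) (comb s u.length vL vR) φ ↔
          ∃ p ∈ L, oSat u vL p.1 ∧ oSat v vR p.2)) := Iff.rfl

/-- Negation of a decomposition list. -/
def notD : List (Option (FO A) × Option (FO A)) → List (Option (FO A) × Option (FO A))
  | [] => [(Option.none, Option.none)]
  | (a, b) :: t =>
    match a, b with
    | Option.none, Option.none => []
    | Option.some a', Option.none =>
        (notD t).map fun p => (oAnd (Option.some (FO.not a')) p.1, p.2)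
    | Option.none, Option.some b' =>
        (notD t).map fun p => (p.1, oAnd (Option.some (FO.not b')) p.2)
    | Option.some a', Option.some b' =>
        ((notD t).map fun p => (oAnd (Option.some (FO.not a')) p.1, p.2)) ++
        ((notD t).map fun p => (p.1, oAnd (Option.some (FO.not b')) p.2))

lemma notD_sat {u v : List A} {vL vR : ℕ → ℕ} :
    ∀ {L : List (Option (FO A) × Option (FO A))},
    ((¬ ∃ p ∈ L, oSat u vL p.1 ∧ oSat v vR p.2) ↔
      ∃ p ∈ notD L, oSat u vL p.1 ∧ oSat v vR p.2) := by
  intro L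
  induction L with
  | nil => simp [notD]
  | cons hd t ih =>
      obtain ⟨a, b⟩ := hd
      have step : (¬ ∃ p ∈ (a, b) :: t, oSat u vL p.1 ∧ oSat v vR p.2) ↔
          ((¬ oSat u vL a ∨ ¬ oSat v vR b) ∧ ¬ ∃ p ∈ t, oSat u vL p.1 ∧ oSat v vR p.2) := by
        simp only [List.mem_cons]
        constructor
        · intro h
          constructor
          · by_contra hc
            push_neg at hc
            exact h ⟨(a, b), Or.inl rfl, hc.1, hc.2⟩
          · intro ⟨p, hp, h1, h2⟩; exact h ⟨p, Or.inr hp, h1, h2⟩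
        · rintro ⟨h1, h2⟩ ⟨p, (rfl | hp), hs1, hs2⟩
          · rcases h1 with h1 | h1 <;> [exact h1 hs1; exact h1 hs2]
          · exact h2 ⟨p, hp, hs1, hs2⟩
      rw [step, ih]
      cases a <;> cases b
      · simp [notD, oSat]
      · rename_i b'
        simp only [notD, List.mem_map]
        constructor
        · rintro ⟨(h | h), ⟨p, hp, h1, h2⟩⟩
          · exact absurd oSat_none h
          · exact ⟨(p.1, oAnd (Option.some b'.not) p.2), ⟨p, hp, rfl⟩, h1,
              oSat_oAnd.mpr ⟨h, h2⟩⟩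
        · rintro ⟨_, ⟨p, hp, rfl⟩, h1, h2⟩
          rw [oSat_oAnd] at h2
          exact ⟨Or.inr h2.1, ⟨p, hp, h1, h2.2⟩⟩
      · rename_i a'
        simp only [notD, List.mem_map]
        constructor
        · rintro ⟨(h | h), ⟨p, hp, h1, h2⟩⟩
          · exact ⟨(oAnd (Option.some a'.not) p.1, p.2), ⟨p, hp, rfl⟩,
              oSat_oAnd.mpr ⟨h, h1⟩, h2⟩
          · exact absurd oSat_none h
        · rintro ⟨_, ⟨p, hp, rfl⟩, h1, h2⟩
          rw [oSat_oAnd] at h1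
          exact ⟨Or.inl h1.1, ⟨p, hp, h1.2, h2⟩⟩
      · rename_i a' b'
        simp only [notD, List.mem_append, List.mem_map]
        constructor
        · rintro ⟨(h | h), ⟨p, hp, h1, h2⟩⟩
          · exact ⟨(oAnd (Option.some a'.not) p.1, p.2), Or.inl ⟨p, hp, rfl⟩,
              oSat_oAnd.mpr ⟨h, h1⟩, h2⟩
          · exact ⟨(p.1, oAnd (Option.some b'.not) p.2), Or.inr ⟨p, hp, rfl⟩, h1,
              oSat_oAnd.mpr ⟨h, h2⟩⟩
        · rintro ⟨r, (⟨p, hp, rfl⟩ | ⟨p, hp, rfl⟩), h1, h2⟩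
          · rw [oSat_oAnd] at h1
            exact ⟨Or.inl h1.1, ⟨p, hp, h1.2, h2⟩⟩
          · rw [oSat_oAnd] at h2
            exact ⟨Or.inr h2.1, ⟨p, hp, h1, h2.2⟩⟩

lemma notD_pack {φ : FO A} {s : ℕ → Bool} :
    ∀ {L : List (Option (FO A) × Option (FO A))},
    (∀ p ∈ L, Pack QF 0 φ s p) → ∀ p ∈ notD L, Pack QF 0 (FO.not φ) s p := by
  intro L
  induction L with
  | nil =>
      intro _ p hp
      simp only [notD, List.mem_singleton] at hp
      subst hp
      exact ⟨trivial, trivial, le_refl _, le_refl _, fun n h => h.elim, fun n h => h.elim⟩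
  | cons hd t ih =>
      intro hL p hp
      obtain ⟨a, b⟩ := hd
      have hhd := hL (a, b) (List.mem_cons_self)
      obtain ⟨ha1, hb2, ha3, hb4, ha5, hb6⟩ := hhd
      have ht := ih (fun r hr => hL r (List.mem_cons_of_mem _ hr))
      have build_left : ∀ (a' : FO A), oC QF (Option.some a') → oqr (Option.some a') ≤ 0 →
          (∀ n, oFV (Option.some a') n → FV φ n ∧ s n = false) →
          ∀ r, Pack QF 0 (FO.not φ) s r →
            Pack QF 0 (FO.not φ) s (oAnd (Option.some (FO.not a')) r.1, r.2) := by
        intro a' hq hr hfv r ⟨r1, r2, r3, r4, r5, r6⟩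
        refine ⟨oC_oAnd (fun _ _ hp hq => ⟨hp, hq⟩) hq r1, r2, ?_, r4, ?_, r6⟩
        · rw [oqr_oAnd]
          exact max_le (by simpa [oqr, qr] using hr) r3
        · intro n hn
          rcases oFV_oAnd hn with hn | hn
          · exact hfv n hn
          · exact r5 n hn
      have build_right : ∀ (b' : FO A), oC QF (Option.some b') → oqr (Option.some b') ≤ 0 →
          (∀ n, oFV (Option.some b') n → FV φ n ∧ s n = true) →
          ∀ r, Pack QF 0 (FO.not φ) s r →
            Pack QF 0 (FO.not φ) s (r.1, oAnd (Option.some (FO.not b')) r.2) := by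
        intro b' hq hr hfv r ⟨r1, r2, r3, r4, r5, r6⟩
        refine ⟨r1, oC_oAnd (fun _ _ hp hq => ⟨hp, hq⟩) hq r2, r3, ?_, r5, ?_⟩
        · rw [oqr_oAnd]
          exact max_le (by simpa [oqr, qr] using hr) r4
        · intro n hn
          rcases oFV_oAnd hn with hn | hn
          · exact hfv n hn
          · exact r6 n hn
      cases a <;> cases b <;> simp only [notD, List.mem_map, List.mem_append] at hp
      · exact absurd hp List.not_mem_nil
      · obtain ⟨r, hr, rfl⟩ := hp
        exact build_right _ hb2 hb4 hb6 r (ht r hr)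
      · obtain ⟨r, hr, rfl⟩ := hp
        exact build_left _ ha1 ha3 ha5 r (ht r hr)
      · rcases hp with ⟨r, hr, rfl⟩ | ⟨r, hr, rfl⟩
        · exact build_left _ ha1 ha3 ha5 r (ht r hr)
        · exact build_right _ hb2 hb4 hb6 r (ht r hr)

lemma Dec.not {φ : FO A} {s : ℕ → Bool} {L : List (Option (FO A) × Option (FO A))}
    (h : Dec QF 0 φ s L) : Dec QF 0 (FO.not φ) s (notD L) := by
  refine ⟨notD_pack h.1, ?_⟩
  intro u v vL vR hinv
  have i := h.2 u v vL vR hinv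
  show ¬ Sat _ _ φ ↔ _
  rw [i]
  exact notD_sat

lemma qf_decomp {φ : FO A} (h : QF φ) (s : ℕ → Bool) : ∃ L, Dec QF 0 φ s L := by
  induction φ with
  | letter a x =>
      cases hs : s x with
      | false =>
          refine ⟨[(Option.some (FO.letter a x), Option.none)], ?_, ?_⟩
          · rintro p hp
            simp only [List.mem_singleton] at hp
            subst hp
            refine ⟨trivial, trivial, le_refl _, le_refl _, ?_, fun n hn => hn.elim⟩
            rintro n rfl
            exact ⟨rfl, hs⟩
          · intro u v vL vR hinv
            have hx : vL x < u.length := by simpa [hs] using hinv x rfl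
            show (u ++ v)[comb s u.length vL vR x]? = Option.some a ↔ _
            rw [show comb s u.length vL vR x = vL x by simp [comb, hs],
              List.getElem?_append_left hx]
            simp [oSat, Sat]
      | true =>
          refine ⟨[(Option.none, Option.some (FO.letter a x))], ?_, ?_⟩
          · rintro p hp
            simp only [List.mem_singleton] at hp
            subst hp
            refine ⟨trivial, trivial, le_refl _, le_refl _, fun n hn => hn.elim, ?_⟩
            rintro n rfl
            exact ⟨rfl, hs⟩
          · intro u v vL vR hinv
            show (u ++ v)[comb s u.length vL vR x]? = Option.some a ↔ _
            rw [show comb s u.length vL vR x = u.length + vR x by simp [comb, hs],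
              List.getElem?_append_right (Nat.le_add_right _ _)]
            simp [oSat, Sat]
  | lt x y =>
      cases hsx : s x <;> cases hsy : s y
      · refine ⟨[(Option.some (FO.lt x y), Option.none)], ?_, ?_⟩
        · rintro p hp
          simp only [List.mem_singleton] at hp
          subst hp
          refine ⟨trivial, trivial, le_refl _, le_refl _, ?_, fun n hn => hn.elim⟩
          rintro n (rfl | rfl)
          · exact ⟨Or.inl rfl, hsx⟩
          · exact ⟨Or.inr rfl, hsy⟩
        · intro u v vL vR hinv
          have hy : vL y < u.length := by simpa [hsy] using hinv y (Or.inr rfl)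
          show comb s u.length vL vR x < comb s u.length vL vR y ∧
            comb s u.length vL vR y < (u ++ v).length ↔ _
          rw [show comb s u.length vL vR x = vL x by simp [comb, hsx],
            show comb s u.length vL vR y = vL y by simp [comb, hsy]]
          simp only [List.length_append, List.mem_singleton]
          constructor
          · rintro ⟨h1, -⟩
            exact ⟨_, rfl, show vL x < vL y ∧ vL y < u.length from ⟨h1, hy⟩, oSat_none⟩
          · rintro ⟨p, rfl, h1, -⟩
            obtain ⟨h1, h2⟩ := (oSat_some).mp h1
            exact ⟨h1, by omega⟩
      · refine ⟨[(Option.none, Option.none)], ?_, ?_⟩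
        · rintro p hp
          simp only [List.mem_singleton] at hp
          subst hp
          exact ⟨trivial, trivial, le_refl _, le_refl _, fun n hn => hn.elim,
            fun n hn => hn.elim⟩
        · intro u v vL vR hinv
          have hx : vL x < u.length := by simpa [hsx] using hinv x (Or.inl rfl)
          have hy : vR y < v.length := by simpa [hsy] using hinv y (Or.inr rfl)
          show comb s u.length vL vR x < comb s u.length vL vR y ∧
            comb s u.length vL vR y < (u ++ v).length ↔ _
          rw [show comb s u.length vL vR x = vL x by simp [comb, hsx],
            show comb s u.length vL vR y = u.length + vR y by simp [comb, hsy]]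
          simp only [List.length_append, List.mem_singleton]
          constructor
          · rintro -
            exact ⟨_, rfl, oSat_none, oSat_none⟩
          · rintro -
            exact ⟨by omega, by omega⟩
      · refine ⟨[], fun p hp => absurd hp List.not_mem_nil, ?_⟩
        intro u v vL vR hinv
        have hy : vL y < u.length := by simpa [hsy] using hinv y (Or.inr rfl)
        show comb s u.length vL vR x < comb s u.length vL vR y ∧
          comb s u.length vL vR y < (u ++ v).length ↔ _
        rw [show comb s u.length vL vR x = u.length + vR x by simp [comb, hsx],
          show comb s u.length vL vR y = vL y by simp [comb, hsy]]
        constructor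
        · rintro ⟨h1, -⟩; omega
        · rintro ⟨p, hp, -⟩; exact absurd hp List.not_mem_nil
      · refine ⟨[(Option.none, Option.some (FO.lt x y))], ?_, ?_⟩
        · rintro p hp
          simp only [List.mem_singleton] at hp
          subst hp
          refine ⟨trivial, trivial, le_refl _, le_refl _, fun n hn => hn.elim, ?_⟩
          rintro n (rfl | rfl)
          · exact ⟨Or.inl rfl, hsx⟩
          · exact ⟨Or.inr rfl, hsy⟩
        · intro u v vL vR hinv
          show comb s u.length vL vR x < comb s u.length vL vR y ∧
            comb s u.length vL vR y < (u ++ v).length ↔ _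
          rw [show comb s u.length vL vR x = u.length + vR x by simp [comb, hsx],
            show comb s u.length vL vR y = u.length + vR y by simp [comb, hsy]]
          simp only [List.length_append, List.mem_singleton]
          constructor
          · rintro ⟨h1, h2⟩
            exact ⟨_, rfl, oSat_none,
              show vR x < vR y ∧ vR y < v.length from ⟨by omega, by omega⟩⟩
          · rintro ⟨p, rfl, -, h2⟩
            obtain ⟨h1, h2⟩ := (oSat_some).mp h2
            exact ⟨by omega, by omega⟩
  | not φ ih =>
      obtain ⟨L, hL⟩ := ih h
      exact ⟨notD L, hL.not⟩
  | and φ ψ ih₁ ih₂ =>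
      obtain ⟨L₁, h₁⟩ := ih₁ h.1
      obtain ⟨L₂, h₂⟩ := ih₂ h.2
      exact ⟨_, h₁.and (fun _ _ hp hq => ⟨hp, hq⟩) h₂⟩
  | or φ ψ ih₁ ih₂ =>
      obtain ⟨L₁, h₁⟩ := ih₁ h.1
      obtain ⟨L₂, h₂⟩ := ih₂ h.2
      exact ⟨_, h₁.or h₂⟩
  | ex φ ih => exact h.elim
  | all φ ih => exact h.elim


/-! ### Decomposition: quantifier steps -/

/-- Prepend a value to an assignment. -/
def vcons (p : ℕ) (v : ℕ → ℕ) : ℕ → ℕ := fun n => Nat.casesOn n p v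

/-- Prepend a side to a side function. -/
def scons (b : Bool) (s : ℕ → Bool) : ℕ → Bool := fun n => Nat.casesOn n b s

lemma comb_scons_false {s : ℕ → Bool} {m p z : ℕ} {vL vR : ℕ → ℕ} :
    comb (scons false s) m (vcons p vL) (vcons z vR) = vcons p (comb s m vL vR) := by
  funext n; cases n <;> rfl

lemma comb_scons_true {s : ℕ → Bool} {m p z : ℕ} {vL vR : ℕ → ℕ} :
    comb (scons true s) m (vcons z vL) (vcons p vR) = vcons (m + p) (comb s m vL vR) := by
  funext n; cases n <;> rfl

/-- Fill an optional formula with a default "variable 0 in range" formula. -/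
noncomputable def oGetD (o : Option (FO A)) : FO A := o.getD (inRange 0)

/-- Shift the variables of an optional formula down by one. -/
def oPred (o : Option (FO A)) : Option (FO A) := o.map (rename Nat.pred)

lemma sat_oGetD {u : List A} {vL : ℕ → ℕ} {p : ℕ} (hp : p < u.length)
    {o : Option (FO A)} : Sat u (vcons p vL) (oGetD o) ↔ oSat u (vcons p vL) o := by
  cases o with
  | none =>
      simp only [oGetD, Option.getD_none, sat_inRange]
      exact ⟨fun _ => trivial, fun _ => hp⟩
  | some ψ => exact Iff.rfl

lemma cls_oGetD {C : FO A → Prop} (hCqf : ∀ ψ, QF ψ → C ψ) {o : Option (FO A)}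
    (h : oC C o) : C (oGetD o) := by
  cases o with
  | none => exact hCqf _ qf_inRange
  | some ψ => exact h

lemma qr_oGetD {o : Option (FO A)} : qr (oGetD o) = oqr o := by
  cases o with
  | none => exact qr_inRange
  | some ψ => rfl

lemma fv_oGetD {o : Option (FO A)} {n : ℕ} (h : FV (oGetD o) n) : oFV o n ∨ n = 0 := by
  cases o with
  | none => exact Or.inr (fv_inRange h)
  | some ψ => exact Or.inl h

lemma sat_oPred {v : List A} {vR : ℕ → ℕ} {z : ℕ} {o : Option (FO A)}
    (h0 : ¬ oFV o 0) : oSat v vR (oPred o) ↔ oSat v (vcons z vR) o := by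
  cases o with
  | none => exact Iff.rfl
  | some ψ =>
      show Sat v vR (rename Nat.pred ψ) ↔ Sat v (vcons z vR) ψ
      rw [sat_rename]
      refine sat_congr fun n hn => ?_
      cases n with
      | zero => exact absurd hn h0
      | succ m => rfl

lemma oC_oPred {C : FO A → Prop} (hCren : ∀ (f : ℕ → ℕ) ψ, C ψ → C (rename f ψ))
    {o : Option (FO A)} (h : oC C o) : oC C (oPred o) := by
  cases o with
  | none => trivial
  | some ψ => exact hCren _ _ h

lemma oqr_oPred {o : Option (FO A)} : oqr (oPred o) = oqr o := by
  cases o with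
  | none => rfl
  | some ψ => exact qr_rename

lemma oFV_oPred {o : Option (FO A)} {n : ℕ} (h : oFV (oPred o) n) :
    oFV o (n + 1) ∨ oFV o 0 := by
  cases o with
  | none => exact h.elim
  | some ψ =>
      obtain ⟨m, hm, hpred⟩ := fv_rename.mp h
      cases m with
      | zero => exact Or.inr hm
      | succ m' =>
          left
          have : m' = n := hpred
          subst this
          exact hm

lemma Dec.exd {C : FO A → Prop} (hCqf : ∀ ψ, QF ψ → C ψ)
    (hCex : ∀ ψ, C ψ → C (FO.ex ψ))
    (hCren : ∀ (f : ℕ → ℕ) ψ, C ψ → C (rename f ψ))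
    {q : ℕ} {φ : FO A} {s : ℕ → Bool}
    {L₀ L₁ : List (Option (FO A) × Option (FO A))}
    (h₀ : Dec C q φ (scons false s) L₀) (h₁ : Dec C q φ (scons true s) L₁) :
    Dec C (q + 1) (FO.ex φ) s
      (L₀.map (fun r => (Option.some (FO.ex (oGetD r.1)), oPred r.2)) ++
       L₁.map (fun r => (oPred r.1, Option.some (FO.ex (oGetD r.2))))) := by
  constructor
  · intro p hp
    rcases List.mem_append.mp hp with hp | hp <;>
      · simp only [List.mem_map] at hp
        obtain ⟨r, hr, rfl⟩ := hp
        first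
        | (obtain ⟨r1, r2, r3, r4, r5, r6⟩ := h₀.1 r hr
           refine ⟨hCex _ (cls_oGetD hCqf r1), oC_oPred hCren r2, ?_, ?_, ?_, ?_⟩
           · show qr (oGetD r.1) + 1 ≤ q + 1
             rw [qr_oGetD]; omega
           · rw [oqr_oPred]; omega
           · intro n hn
             rcases fv_oGetD (hn : FV (oGetD r.1) (n + 1)) with hn' | hn'
             · exact ⟨(r5 _ hn').1, (r5 _ hn').2⟩
             · exact absurd hn' (Nat.succ_ne_zero n)
           · intro n hn
             rcases oFV_oPred hn with hn' | hn'
             · exact ⟨(r6 _ hn').1, (r6 _ hn').2⟩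
             · exact absurd (r6 _ hn').2 (by simp [scons]))
        | (obtain ⟨r1, r2, r3, r4, r5, r6⟩ := h₁.1 r hr
           refine ⟨oC_oPred hCren r1, hCex _ (cls_oGetD hCqf r2), ?_, ?_, ?_, ?_⟩
           · rw [oqr_oPred]; omega
           · show qr (oGetD r.2) + 1 ≤ q + 1
             rw [qr_oGetD]; omega
           · intro n hn
             rcases oFV_oPred hn with hn' | hn'
             · exact ⟨(r5 _ hn').1, (r5 _ hn').2⟩
             · exact absurd (r5 _ hn').2 (by simp [scons])
           · intro n hn
             rcases fv_oGetD (hn : FV (oGetD r.2) (n + 1)) with hn' | hn'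
             · exact ⟨(r6 _ hn').1, (r6 _ hn').2⟩
             · exact absurd hn' (Nat.succ_ne_zero n))
  · intro u v vL vR hinv
    have hinv₀ : ∀ p, p < u.length → ∀ n, FV φ n →
        if scons false s n then vcons 0 vR n < v.length else vcons p vL n < u.length := by
      intro p hp n hn
      cases n with
      | zero => simpa [scons, vcons] using hp
      | succ m =>
          have := hinv m hn
          cases hs : s m <;> simpa [scons, vcons, hs] using by simpa [hs] using this
    have hinv₁ : ∀ p, p < v.length → ∀ n, FV φ n →
        if scons true s n then vcons p vR n < v.length else vcons 0 vL n < u.length := by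
      intro p hp n hn
      cases n with
      | zero => simpa [scons, vcons] using hp
      | succ m =>
          have := hinv m hn
          cases hs : s m <;> simpa [scons, vcons, hs] using by simpa [hs] using this
    show (∃ p, p < (u ++ v).length ∧ _) ↔ _
    constructor
    · rintro ⟨p, hp, hsat⟩
      rw [List.length_append] at hp
      by_cases hpu : p < u.length
      · -- left witness
        have : Sat (u ++ v) (comb (scons false s) u.length (vcons p vL) (vcons 0 vR)) φ := by
          rw [comb_scons_false]; exact hsat
        rw [h₀.2 u v _ _ (hinv₀ p hpu)] at this
        obtain ⟨r, hr, hs1, hs2⟩ := this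
        obtain ⟨r1, r2, r3, r4, r5, r6⟩ := h₀.1 r hr
        have h02 : ¬ oFV r.2 0 := fun hc => by simpa [scons] using (r6 0 hc).2
        refine ⟨(Option.some (FO.ex (oGetD r.1)), oPred r.2), ?_, ?_, ?_⟩
        · exact List.mem_append.mpr (Or.inl (List.mem_map.mpr ⟨r, hr, rfl⟩))
        · exact ⟨p, hpu, (sat_oGetD hpu).mpr hs1⟩
        · exact (sat_oPred h02).mpr hs2
      · -- right witness
        have hq : p - u.length < v.length := by omega
        have heq : p = u.length + (p - u.length) := by omega
        have : Sat (u ++ v) (comb (scons true s) u.length (vcons 0 vL) (vcons (p - u.length) vR)) φ := by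
          rw [comb_scons_true, ← heq]; exact hsat
        rw [h₁.2 u v _ _ (hinv₁ _ hq)] at this
        obtain ⟨r, hr, hs1, hs2⟩ := this
        obtain ⟨r1, r2, r3, r4, r5, r6⟩ := h₁.1 r hr
        have h01 : ¬ oFV r.1 0 := fun hc => by simpa [scons] using (r5 0 hc).2
        refine ⟨(oPred r.1, Option.some (FO.ex (oGetD r.2))), ?_, ?_, ?_⟩
        · exact List.mem_append.mpr (Or.inr (List.mem_map.mpr ⟨r, hr, rfl⟩))
        · exact (sat_oPred h01).mpr hs1
        · exact ⟨p - u.length, hq, (sat_oGetD hq).mpr hs2⟩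
    · rintro ⟨p', hp', hs1, hs2⟩
      rcases List.mem_append.mp hp' with hp' | hp'
      · simp only [List.mem_map] at hp'
        obtain ⟨r, hr, rfl⟩ := hp'
        obtain ⟨r1, r2, r3, r4, r5, r6⟩ := h₀.1 r hr
        have h02 : ¬ oFV r.2 0 := fun hc => by simpa [scons] using (r6 0 hc).2
        obtain ⟨p, hpu, hsat1⟩ := hs1
        refine ⟨p, by rw [List.length_append]; omega, ?_⟩
        show Sat (u ++ v) (vcons p (comb s u.length vL vR)) φ
        rw [← comb_scons_false (z := 0), h₀.2 u v _ _ (hinv₀ p hpu)]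
        exact ⟨r, hr, (sat_oGetD hpu).mp hsat1, (sat_oPred h02).mp hs2⟩
      · simp only [List.mem_map] at hp'
        obtain ⟨r, hr, rfl⟩ := hp'
        obtain ⟨r1, r2, r3, r4, r5, r6⟩ := h₁.1 r hr
        have h01 : ¬ oFV r.1 0 := fun hc => by simpa [scons] using (r5 0 hc).2
        obtain ⟨p, hpv, hsat2⟩ := hs2
        refine ⟨u.length + p, by rw [List.length_append]; omega, ?_⟩
        show Sat (u ++ v) (vcons (u.length + p) (comb s u.length vL vR)) φ
        rw [← comb_scons_true (z := 0), h₁.2 u v _ _ (hinv₁ p hpv)]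
        exact ⟨r, hr, (sat_oPred h01).mp hs1, (sat_oGetD hpv).mp hsat2⟩


/-! ### Universal quantifier step -/

/-- Disjunction of first components of a sublist of a decomposition. -/
noncomputable def bigOr (f : Option (FO A) × Option (FO A) → Option (FO A))
    (S : List (Option (FO A) × Option (FO A))) : FO A :=
  S.foldr (fun r acc => FO.or (oGetD (f r)) acc) (FO.lt 0 0)

/-- Conjunction of shifted components of a sublist of a decomposition. -/
def bigAnd (f : Option (FO A) × Option (FO A) → Option (FO A))
    (S : List (Option (FO A) × Option (FO A))) : Option (FO A) :=
  S.foldr (fun r acc => oAnd (oPred (f r)) acc) Option.none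

lemma sat_bigOr {u : List A} {vL : ℕ → ℕ} {p : ℕ} (hp : p < u.length)
    {f : Option (FO A) × Option (FO A) → Option (FO A)}
    {S : List (Option (FO A) × Option (FO A))} :
    Sat u (vcons p vL) (bigOr f S) ↔ ∃ r ∈ S, oSat u (vcons p vL) (f r) := by
  induction S with
  | nil =>
      simp only [bigOr, List.foldr_nil]
      show vcons p vL 0 < vcons p vL 0 ∧ _ ↔ _
      simp
  | cons hd t ih =>
      simp only [bigOr, List.foldr_cons]
      show Sat u (vcons p vL) (oGetD (f hd)) ∨ _ ↔ _
      rw [show (t.foldr (fun r acc => FO.or (oGetD (f r)) acc) (FO.lt 0 0)) = bigOr f t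
        from rfl, ih, sat_oGetD hp]
      simp

lemma cls_bigOr {C : FO A → Prop} (hCqf : ∀ ψ, QF ψ → C ψ)
    (hCor : ∀ a b, C a → C b → C (FO.or a b))
    {f : Option (FO A) × Option (FO A) → Option (FO A)}
    {S : List (Option (FO A) × Option (FO A))}
    (h : ∀ r ∈ S, oC C (f r)) : C (bigOr f S) := by
  induction S with
  | nil => exact hCqf _ trivial
  | cons hd t ih =>
      exact hCor _ _ (cls_oGetD hCqf (h hd (List.mem_cons_self)))
        (ih fun r hr => h r (List.mem_cons_of_mem _ hr))

lemma qr_bigOr {q : ℕ} {f : Option (FO A) × Option (FO A) → Option (FO A)}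
    {S : List (Option (FO A) × Option (FO A))}
    (h : ∀ r ∈ S, oqr (f r) ≤ q) : qr (bigOr f S) ≤ q := by
  induction S with
  | nil => exact Nat.zero_le q
  | cons hd t ih =>
      show max (qr (oGetD (f hd))) _ ≤ q
      rw [qr_oGetD]
      exact max_le (h hd (List.mem_cons_self)) (ih fun r hr => h r (List.mem_cons_of_mem _ hr))

lemma fv_bigOr {n : ℕ} {f : Option (FO A) × Option (FO A) → Option (FO A)}
    {S : List (Option (FO A) × Option (FO A))}
    (h : FV (bigOr f S) n) : (∃ r ∈ S, oFV (f r) n) ∨ n = 0 := by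
  induction S with
  | nil => rcases h with h | h <;> exact Or.inr h
  | cons hd t ih =>
      rcases h with h | h
      · rcases fv_oGetD h with h | h
        · exact Or.inl ⟨hd, List.mem_cons_self, h⟩
        · exact Or.inr h
      · rcases ih h with ⟨r, hr, hfv⟩ | h
        · exact Or.inl ⟨r, List.mem_cons_of_mem _ hr, hfv⟩
        · exact Or.inr h

lemma oSat_bigAnd {w : List A} {vv : ℕ → ℕ}
    {f : Option (FO A) × Option (FO A) → Option (FO A)}
    {S : List (Option (FO A) × Option (FO A))} :
    oSat w vv (bigAnd f S) ↔ ∀ r ∈ S, oSat w vv (oPred (f r)) := by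
  induction S with
  | nil => simp [bigAnd]
  | cons hd t ih =>
      simp only [bigAnd, List.foldr_cons]
      rw [oSat_oAnd,
        show (t.foldr (fun r acc => oAnd (oPred (f r)) acc) Option.none) = bigAnd f t from rfl,
        ih]
      simp

lemma oC_bigAnd {C : FO A → Prop}
    (hCren : ∀ (g : ℕ → ℕ) ψ, C ψ → C (rename g ψ))
    (hCand : ∀ a b, C a → C b → C (FO.and a b))
    {f : Option (FO A) × Option (FO A) → Option (FO A)}
    {S : List (Option (FO A) × Option (FO A))}
    (h : ∀ r ∈ S, oC C (f r)) : oC C (bigAnd f S) := by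
  induction S with
  | nil => trivial
  | cons hd t ih =>
      exact oC_oAnd hCand (oC_oPred hCren (h hd (List.mem_cons_self)))
        (ih fun r hr => h r (List.mem_cons_of_mem _ hr))

lemma oqr_bigAnd {q : ℕ} {f : Option (FO A) × Option (FO A) → Option (FO A)}
    {S : List (Option (FO A) × Option (FO A))}
    (h : ∀ r ∈ S, oqr (f r) ≤ q) : oqr (bigAnd f S) ≤ q := by
  induction S with
  | nil => exact Nat.zero_le q
  | cons hd t ih =>
      show oqr (oAnd (oPred (f hd)) _) ≤ q
      rw [oqr_oAnd, oqr_oPred]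
      exact max_le (h hd (List.mem_cons_self)) (ih fun r hr => h r (List.mem_cons_of_mem _ hr))

lemma oFV_bigAnd {n : ℕ} {f : Option (FO A) × Option (FO A) → Option (FO A)}
    {S : List (Option (FO A) × Option (FO A))}
    (h : oFV (bigAnd f S) n) : ∃ r ∈ S, oFV (oPred (f r)) n := by
  induction S with
  | nil => exact h.elim
  | cons hd t ih =>
      rcases oFV_oAnd h with h | h
      · exact ⟨hd, List.mem_cons_self, h⟩
      · obtain ⟨r, hr, hfv⟩ := ih h
        exact ⟨r, List.mem_cons_of_mem _ hr, hfv⟩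

lemma forall_exists_sublist {α : Type} {L : List α} {m : ℕ}
    {Q : ℕ → α → Prop} {R : α → Prop} :
    (∀ p, p < m → ∃ r ∈ L, Q p r ∧ R r) ↔
      ∃ S ∈ L.sublists, (∀ p, p < m → ∃ r ∈ S, Q p r) ∧ (∀ r ∈ S, R r) := by
  classical
  constructor
  · intro h
    refine ⟨L.filter (fun r => decide (R r)), List.mem_sublists.mpr (List.filter_sublist),
      fun p hp => ?_, fun r hr => ?_⟩
    · obtain ⟨r, hr, hq, hR⟩ := h p hp
      exact ⟨r, List.mem_filter.mpr ⟨hr, by simp [hR]⟩, hq⟩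
    · simpa using (List.mem_filter.mp hr).2
  · rintro ⟨S, hS, h1, h2⟩ p hp
    obtain ⟨r, hr, hq⟩ := h1 p hp
    exact ⟨r, (List.mem_sublists.mp hS).subset hr, hq, h2 r hr⟩

lemma Dec.alld {C : FO A → Prop} (hCqf : ∀ ψ, QF ψ → C ψ)
    (hCall : ∀ ψ, C ψ → C (FO.all ψ))
    (hCand : ∀ a b, C a → C b → C (FO.and a b))
    (hCor : ∀ a b, C a → C b → C (FO.or a b))
    (hCren : ∀ (g : ℕ → ℕ) ψ, C ψ → C (rename g ψ))
    {q : ℕ} {φ : FO A} {s : ℕ → Bool}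
    {L₀ L₁ : List (Option (FO A) × Option (FO A))}
    (h₀ : Dec C q φ (scons false s) L₀) (h₁ : Dec C q φ (scons true s) L₁) :
    Dec C (q + 1) (FO.all φ) s
      ((L₀.sublists ×ˢ L₁.sublists).map fun ST =>
        (oAnd (Option.some (FO.all (bigOr Prod.fst ST.1))) (bigAnd Prod.fst ST.2),
         oAnd (bigAnd Prod.snd ST.1) (Option.some (FO.all (bigOr Prod.snd ST.2))))) := by
  have pack₀ := h₀.1
  have pack₁ := h₁.1
  constructor
  · intro p hp
    simp only [List.mem_map] at hp
    obtain ⟨⟨S, T⟩, hST, rfl⟩ := hp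
    rw [List.mem_product] at hST
    have hSsub : ∀ r ∈ S, r ∈ L₀ := fun r hr => (List.mem_sublists.mp hST.1).subset hr
    have hTsub : ∀ r ∈ T, r ∈ L₁ := fun r hr => (List.mem_sublists.mp hST.2).subset hr
    refine ⟨?_, ?_, ?_, ?_, ?_, ?_⟩
    · exact oC_oAnd hCand
        (hCall _ (cls_bigOr hCqf hCor fun r hr => (pack₀ r (hSsub r hr)).1))
        (oC_bigAnd hCren hCand fun r hr => (pack₁ r (hTsub r hr)).1)
    · exact oC_oAnd hCand
        (oC_bigAnd hCren hCand fun r hr => (pack₀ r (hSsub r hr)).2.1)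
        (hCall _ (cls_bigOr hCqf hCor fun r hr => (pack₁ r (hTsub r hr)).2.1))
    · rw [oqr_oAnd]
      refine max_le ?_ ?_
      · show qr (bigOr Prod.fst S) + 1 ≤ q + 1
        have := qr_bigOr (q := q) (f := Prod.fst) (S := S)
          (fun r hr => (pack₀ r (hSsub r hr)).2.2.1)
        omega
      · exact (oqr_bigAnd fun r hr => (pack₁ r (hTsub r hr)).2.2.1).trans (Nat.le_succ q)
    · rw [oqr_oAnd]
      refine max_le ?_ ?_
      · exact (oqr_bigAnd fun r hr => (pack₀ r (hSsub r hr)).2.2.2.1).trans (Nat.le_succ q)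
      · show qr (bigOr Prod.snd T) + 1 ≤ q + 1
        have := qr_bigOr (q := q) (f := Prod.snd) (S := T)
          (fun r hr => (pack₁ r (hTsub r hr)).2.2.2.1)
        omega
    · intro n hn
      rcases oFV_oAnd hn with hn | hn
      · have hn' : FV (bigOr Prod.fst S) (n + 1) := hn
        rcases fv_bigOr hn' with ⟨r, hr, hfv⟩ | h0
        · have := (pack₀ r (hSsub r hr)).2.2.2.2.1 (n + 1) hfv
          exact ⟨this.1, this.2⟩
        · exact absurd h0 (Nat.succ_ne_zero n)
      · obtain ⟨r, hr, hfv⟩ := oFV_bigAnd hn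
        rcases oFV_oPred hfv with hfv | hfv
        · have := (pack₁ r (hTsub r hr)).2.2.2.2.1 (n + 1) hfv
          exact ⟨this.1, this.2⟩
        · have := (pack₁ r (hTsub r hr)).2.2.2.2.1 0 hfv
          exact absurd this.2 (by simp [scons])
    · intro n hn
      rcases oFV_oAnd hn with hn | hn
      · obtain ⟨r, hr, hfv⟩ := oFV_bigAnd hn
        rcases oFV_oPred hfv with hfv | hfv
        · have := (pack₀ r (hSsub r hr)).2.2.2.2.2 (n + 1) hfv
          exact ⟨this.1, this.2⟩
        · have := (pack₀ r (hSsub r hr)).2.2.2.2.2 0 hfv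
          exact absurd this.2 (by simp [scons])
      · have hn' : FV (bigOr Prod.snd T) (n + 1) := hn
        rcases fv_bigOr hn' with ⟨r, hr, hfv⟩ | h0
        · have := (pack₁ r (hTsub r hr)).2.2.2.2.2 (n + 1) hfv
          exact ⟨this.1, this.2⟩
        · exact absurd h0 (Nat.succ_ne_zero n)
  · intro u v vL vR hinv
    have hinv₀ : ∀ p, p < u.length → ∀ n, FV φ n →
        if scons false s n then vcons 0 vR n < v.length else vcons p vL n < u.length := by
      intro p hp n hn
      cases n with
      | zero => simpa [scons, vcons] using hp
      | succ m =>
          have := hinv m hn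
          cases hs : s m <;> simpa [scons, vcons, hs] using by simpa [hs] using this
    have hinv₁ : ∀ p, p < v.length → ∀ n, FV φ n →
        if scons true s n then vcons p vR n < v.length else vcons 0 vL n < u.length := by
      intro p hp n hn
      cases n with
      | zero => simpa [scons, vcons] using hp
      | succ m =>
          have := hinv m hn
          cases hs : s m <;> simpa [scons, vcons, hs] using by simpa [hs] using this
    have step1 : Sat (u ++ v) (comb s u.length vL vR) (FO.all φ) ↔
        (∀ p, p < u.length → ∃ r ∈ L₀, oSat u (vcons p vL) r.1 ∧ oSat v vR (oPred r.2)) ∧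
        (∀ p, p < v.length → ∃ r ∈ L₁, oSat u vL (oPred r.1) ∧ oSat v (vcons p vR) r.2) := by
      constructor
      · intro H
        constructor
        · intro p hp
          have hsat : Sat (u ++ v) (vcons p (comb s u.length vL vR)) φ :=
            H p (by rw [List.length_append]; omega)
          rw [← comb_scons_false (z := 0), h₀.2 u v _ _ (hinv₀ p hp)] at hsat
          obtain ⟨r, hr, h1, h2⟩ := hsat
          have h02 : ¬ oFV r.2 0 := fun hc => by
            simpa [scons] using ((pack₀ r hr).2.2.2.2.2 0 hc).2
          exact ⟨r, hr, h1, (sat_oPred h02).mpr h2⟩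
        · intro p hp
          have hsat : Sat (u ++ v) (vcons (u.length + p) (comb s u.length vL vR)) φ :=
            H (u.length + p) (by rw [List.length_append]; omega)
          rw [← comb_scons_true (z := 0), h₁.2 u v _ _ (hinv₁ p hp)] at hsat
          obtain ⟨r, hr, h1, h2⟩ := hsat
          have h01 : ¬ oFV r.1 0 := fun hc => by
            simpa [scons] using ((pack₁ r hr).2.2.2.2.1 0 hc).2
          exact ⟨r, hr, (sat_oPred h01).mpr h1, h2⟩
      · rintro ⟨H1, H2⟩ p hp
        rw [List.length_append] at hp
        show Sat (u ++ v) (vcons p (comb s u.length vL vR)) φ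
        by_cases hpu : p < u.length
        · obtain ⟨r, hr, h1, h2⟩ := H1 p hpu
          have h02 : ¬ oFV r.2 0 := fun hc => by
            simpa [scons] using ((pack₀ r hr).2.2.2.2.2 0 hc).2
          rw [← comb_scons_false (z := 0), h₀.2 u v _ _ (hinv₀ p hpu)]
          exact ⟨r, hr, h1, (sat_oPred h02).mp h2⟩
        · have hq : p - u.length < v.length := by omega
          have heq : p = u.length + (p - u.length) := by omega
          obtain ⟨r, hr, h1, h2⟩ := H2 (p - u.length) hq
          have h01 : ¬ oFV r.1 0 := fun hc => by
            simpa [scons] using ((pack₁ r hr).2.2.2.2.1 0 hc).2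
          rw [heq, ← comb_scons_true (z := 0), h₁.2 u v _ _ (hinv₁ _ hq)]
          exact ⟨r, hr, (sat_oPred h01).mp h1, h2⟩
    rw [step1]
    have step2 : (∀ p, p < u.length →
        ∃ r ∈ L₀, oSat u (vcons p vL) r.1 ∧ oSat v vR (oPred r.2)) ↔
        ∃ S ∈ L₀.sublists, Sat u vL (FO.all (bigOr Prod.fst S)) ∧
          oSat v vR (bigAnd Prod.snd S) := by
      rw [forall_exists_sublist (Q := fun p (r : Option (FO A) × Option (FO A)) => oSat u (vcons p vL) r.1)
        (R := fun (r : Option (FO A) × Option (FO A)) => oSat v vR (oPred r.2))]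
      refine exists_congr fun S => and_congr_right fun _ => and_congr ?_ ?_
      · show _ ↔ ∀ p, p < u.length → Sat u (vcons p vL) (bigOr Prod.fst S)
        exact forall_congr' fun p => imp_congr_right fun hp => (sat_bigOr hp).symm
      · rw [oSat_bigAnd]
    have step3 : (∀ p, p < v.length →
        ∃ r ∈ L₁, oSat u vL (oPred r.1) ∧ oSat v (vcons p vR) r.2) ↔
        ∃ T ∈ L₁.sublists, oSat u vL (bigAnd Prod.fst T) ∧
          Sat v vR (FO.all (bigOr Prod.snd T)) := by
      have : (∀ p, p < v.length →
          ∃ r ∈ L₁, oSat v (vcons p vR) r.2 ∧ oSat u vL (oPred r.1)) ↔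
          ∃ T ∈ L₁.sublists, (∀ p, p < v.length → ∃ r ∈ T, oSat v (vcons p vR) r.2) ∧
            ∀ r ∈ T, oSat u vL (oPred r.1) :=
        forall_exists_sublist (Q := fun p (r : Option (FO A) × Option (FO A)) => oSat v (vcons p vR) r.2)
          (R := fun (r : Option (FO A) × Option (FO A)) => oSat u vL (oPred r.1))
      rw [show (∀ p, p < v.length →
          ∃ r ∈ L₁, oSat u vL (oPred r.1) ∧ oSat v (vcons p vR) r.2) ↔
          (∀ p, p < v.length →
          ∃ r ∈ L₁, oSat v (vcons p vR) r.2 ∧ oSat u vL (oPred r.1)) by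
        refine forall_congr' fun p => imp_congr_right fun _ => exists_congr fun r =>
          and_congr_right fun _ => and_comm, this]
      refine exists_congr fun T => and_congr_right fun _ => ?_
      rw [oSat_bigAnd]
      constructor
      · rintro ⟨hQ, hR⟩
        refine ⟨hR, ?_⟩
        intro p hp
        exact (sat_bigOr hp).mpr (hQ p hp)
      · rintro ⟨hR, hQ⟩
        exact ⟨fun p hp => (sat_bigOr hp).mp (hQ p hp), hR⟩
    rw [step2, step3]
    constructor
    · rintro ⟨⟨S, hS, hS1, hS2⟩, ⟨T, hT, hT1, hT2⟩⟩
      refine ⟨_, List.mem_map.mpr ⟨(S, T), List.mem_product.mpr ⟨hS, hT⟩, rfl⟩, ?_, ?_⟩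
      · exact oSat_oAnd.mpr ⟨hS1, hT1⟩
      · exact oSat_oAnd.mpr ⟨hS2, hT2⟩
    · rintro ⟨p, hp, hp1, hp2⟩
      simp only [List.mem_map] at hp
      obtain ⟨⟨S, T⟩, hST, rfl⟩ := hp
      rw [List.mem_product] at hST
      rw [oSat_oAnd] at hp1 hp2
      exact ⟨⟨S, hST.1, hp1.1, hp2.1⟩, ⟨T, hST.2, hp1.2, hp2.2⟩⟩


/-! ### The main decomposition theorem -/

theorem decompose :
    (∀ i (φ : FO A), IsSigma i φ → ∀ s, ∃ L, Dec (IsSigma i) (qr φ) φ s L) ∧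
      (∀ i (φ : FO A), IsPi i φ → ∀ s, ∃ L, Dec (IsPi i) (qr φ) φ s L) := by
  refine sigma_pi_induction
    (fun i φ => ∀ s, ∃ L, Dec (IsSigma i) (qr φ) φ s L)
    (fun i φ => ∀ s, ∃ L, Dec (IsPi i) (qr φ) φ s L)
    ?_ ?_ ?_ ?_ ?_ ?_ ?_ ?_ ?_ ?_
  · intro i φ h s
    obtain ⟨L, hL⟩ := qf_decomp h s
    exact ⟨L, hL.mono (fun ψ hψ => IsSigma.of_qf hψ) (Nat.zero_le _)⟩
  · intro i φ _ ih s
    obtain ⟨L, hL⟩ := ih s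
    exact ⟨L, hL.mono (fun ψ hψ => IsSigma.of_pi hψ) le_rfl⟩
  · intro i φ ψ _ _ ih₁ ih₂ s
    obtain ⟨L₁, h₁⟩ := ih₁ s
    obtain ⟨L₂, h₂⟩ := ih₂ s
    refine ⟨_, Dec.and (fun _ _ hp hq => IsSigma.and hp hq)
      (h₁.mono (fun ψ h => h) (le_max_left _ _))
      (h₂.mono (fun ψ h => h) (le_max_right _ _))⟩
  · intro i φ ψ _ _ ih₁ ih₂ s
    obtain ⟨L₁, h₁⟩ := ih₁ s
    obtain ⟨L₂, h₂⟩ := ih₂ s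
    exact ⟨_, Dec.or (h₁.mono (fun ψ h => h) (le_max_left _ _))
      (h₂.mono (fun ψ h => h) (le_max_right _ _))⟩
  · intro i φ _ ih s
    obtain ⟨L₀, h₀⟩ := ih (scons false s)
    obtain ⟨L₁, h₁⟩ := ih (scons true s)
    exact ⟨_, Dec.exd (fun ψ hψ => IsSigma.of_qf hψ) (fun ψ hψ => IsSigma.ex hψ)
      (fun f ψ hψ => rename_cls.1 _ _ hψ f) h₀ h₁⟩
  · intro i φ h s
    obtain ⟨L, hL⟩ := qf_decomp h s
    exact ⟨L, hL.mono (fun ψ hψ => IsPi.of_qf hψ) (Nat.zero_le _)⟩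
  · intro i φ _ ih s
    obtain ⟨L, hL⟩ := ih s
    exact ⟨L, hL.mono (fun ψ hψ => IsPi.of_sigma hψ) le_rfl⟩
  · intro i φ ψ _ _ ih₁ ih₂ s
    obtain ⟨L₁, h₁⟩ := ih₁ s
    obtain ⟨L₂, h₂⟩ := ih₂ s
    exact ⟨_, Dec.and (fun _ _ hp hq => IsPi.and hp hq)
      (h₁.mono (fun ψ h => h) (le_max_left _ _))
      (h₂.mono (fun ψ h => h) (le_max_right _ _))⟩
  · intro i φ ψ _ _ ih₁ ih₂ s
    obtain ⟨L₁, h₁⟩ := ih₁ s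
    obtain ⟨L₂, h₂⟩ := ih₂ s
    exact ⟨_, Dec.or (h₁.mono (fun ψ h => h) (le_max_left _ _))
      (h₂.mono (fun ψ h => h) (le_max_right _ _))⟩
  · intro i φ _ ih s
    obtain ⟨L₀, h₀⟩ := ih (scons false s)
    obtain ⟨L₁, h₁⟩ := ih (scons true s)
    exact ⟨_, Dec.alld (fun ψ hψ => IsPi.of_qf hψ) (fun ψ hψ => IsPi.all hψ)
      (fun _ _ hp hq => IsPi.and hp hq) (fun _ _ hp hq => IsPi.or hp hq)
      (fun f ψ hψ => rename_cls.2 _ _ hψ f) h₀ h₁⟩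

lemma fv_lt_fvBound {φ : FO A} : ∀ {n : ℕ}, FV φ n → n < fvBound φ := by
  induction φ with
  | letter a x =>
      intro n h
      have hx : n = x := h
      subst hx
      exact Nat.lt_succ_self n
  | lt x y =>
      intro n h
      rcases (h : n = x ∨ n = y) with rfl | rfl <;> · simp only [fvBound]; omega
  | not φ ih => exact fun h => ih h
  | and φ ψ ih₁ ih₂ =>
      rintro n (h | h)
      · exact lt_of_lt_of_le (ih₁ h) (le_max_left _ _)
      · exact lt_of_lt_of_le (ih₂ h) (le_max_right _ _)
  | or φ ψ ih₁ ih₂ =>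
      rintro n (h | h)
      · exact lt_of_lt_of_le (ih₁ h) (le_max_left _ _)
      · exact lt_of_lt_of_le (ih₂ h) (le_max_right _ _)
  | ex φ ih =>
      intro n h
      have := ih h
      simp only [fvBound]; omega
  | all φ ih =>
      intro n h
      have := ih h
      simp only [fvBound]; omega

lemma sle_concat {i k : ℕ} {w₁ w₂ w₁' w₂' : List A}
    (h : sle i k w₁ w₂) (h' : sle i k w₁' w₂') : sle i k (w₁ ++ w₁') (w₂ ++ w₂') := by
  intro φ hφ hqr hsent hsat
  obtain ⟨L, hL⟩ := decompose.1 i φ hφ (fun _ => false)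
  have hnofv : ∀ n, ¬ FV φ n := by
    intro n hn
    have := fv_lt_fvBound hn
    rw [hsent] at this
    omega
  have hcomb : ∀ m : ℕ, comb (fun _ => false) m (fun _ => 0) (fun _ => 0) = (fun _ => 0) := by
    intro m; funext n; rfl
  have hinv : ∀ (u v : List A), ∀ n, FV φ n →
      if (fun _ => false : ℕ → Bool) n then (fun _ => 0 : ℕ → ℕ) n < v.length
      else (fun _ => 0 : ℕ → ℕ) n < u.length :=
    fun u v n hn => absurd hn (hnofv n)
  have e₁ := hL.2 w₁ w₁' (fun _ => 0) (fun _ => 0) (hinv w₁ w₁')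
  have e₂ := hL.2 w₂ w₂' (fun _ => 0) (fun _ => 0) (hinv w₂ w₂')
  rw [hcomb] at e₁ e₂
  obtain ⟨p, hp, s1, s2⟩ := e₁.mp hsat
  obtain ⟨p1, p2, p3, p4, p5, p6⟩ := hL.1 p hp
  have sentence_of : ∀ o : Option (FO A), (∀ n, oFV o n → False) →
      ∀ ψ, o = Option.some ψ → IsSentence ψ := by
    rintro o hno ψ rfl
    exact Nat.le_zero.mp (fvBound_le fun n hn => absurd hn (hno n))
  have t1 : oSat w₂ (fun _ => 0) p.1 := by
    cases hp1 : p.1 with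
    | none => trivial
    | some ψ =>
        rw [hp1] at p1 p3 p5 s1
        exact h ψ p1 (le_trans p3 hqr)
          (sentence_of _ (fun n hn => hnofv n (p5 n hn).1) ψ rfl) s1
  have t2 : oSat w₂' (fun _ => 0) p.2 := by
    cases hp2 : p.2 with
    | none => trivial
    | some ψ =>
        rw [hp2] at p2 p4 p6 s2
        exact h' ψ p2 (le_trans p4 hqr)
          (sentence_of _ (fun n hn => hnofv n (p6 n hn).1) ψ rfl) s2
  exact e₂.mpr ⟨p, hp, t1, t2⟩

end FO

/-- For each level `i` and rank `k`, the relation `≤ᵏᵢ` (every `Σᵢ` sentence of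
quantifier rank at most `k` satisfied by `w` is satisfied by `w'`) is a preorder
compatible with concatenation of words. -/
theorem sle_preorder_and_concat_compatible {A : Type} [Fintype A] (i k : ℕ) :
    (∀ w : List A, FO.sle i k w w) ∧
    (∀ w₁ w₂ w₃ : List A, FO.sle i k w₁ w₂ → FO.sle i k w₂ w₃ → FO.sle i k w₁ w₃) ∧
    (∀ w₁ w₂ w₁' w₂' : List A, FO.sle i k w₁ w₂ → FO.sle i k w₁' w₂' →
      FO.sle i k (w₁ ++ w₁') (w₂ ++ w₂')) := by
  refine ⟨fun w φ _ _ _ h => h,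
    fun w₁ w₂ w₃ h12 h23 φ h1 h2 h3 h4 => h23 φ h1 h2 h3 (h12 φ h1 h2 h3 h4),
    fun w₁ w₂ w₁' w₂' h h' => FO.sle_concat h h'⟩
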